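/- For every n ≥ 1 and every μ ∈ wcomp_{n−1} there is a bijection Lyn_μ ≅ Comb_μ; in particular |Lyn_μ| = |Comb_μ|. -/

import Mathlib

/-! Colored labeled binary trees.  Leaf labels are positive integers; colors are
natural numbers (the paper's color set ℙ = {1,2,…} is identified with ℕ via j ↦ j-1,
i.e. color index `i : ℕ` represents the paper's color `i+1`). -/

inductive CTree : Type
  | leaf (label : ℕ) : CTree
  | node (color : ℕ) (l r : CTree) : CTree
deriving DecidableEq

namespace CTree

/-- leaf labels from left to right -/
def leavesList : CTree → List ℕ
  | leaf m => [m]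
  | node _ l r => leavesList l ++ leavesList r

/-- the valency `v(x)`: smallest leaf label of the subtree -/
def minLeaf : CTree → ℕ
  | leaf m => m
  | node _ l r => min (minLeaf l) (minLeaf r)

/-- a tree is normalized if in every subtree the leftmost leaf carries the
smallest leaf label of the subtree. -/
def Normalized : CTree → Prop
  | leaf _ => True
  | node _ l r => Normalized l ∧ Normalized r ∧ minLeaf l < minLeaf r

/-- number of internal nodes with color `j` -/
def colorCount : CTree → ℕ → ℕ
  | leaf _, _ => 0
  | node c l r, j => (if c = j then 1 else 0) + colorCount l j + colorCount r j

def isLeafB : CTree → Bool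
  | leaf _ => true
  | node _ _ _ => false

def left : CTree → CTree
  | leaf m => leaf m
  | node _ l _ => l

def right : CTree → CTree
  | leaf m => leaf m
  | node _ _ r => r

def rootColor : CTree → ℕ
  | leaf _ => 0
  | node c _ _ => c

/-- the root of `T` is a Lyndon node: either the left child is a leaf
or `v(R(L(x))) > v(R(x))`. (Leaves count as Lyndon.) -/
def RootLyndonB (T : CTree) : Bool :=
  isLeafB T || isLeafB (left T) || decide (minLeaf (right T) < minLeaf (right (left T)))

/-- colored Lyndon condition: every internal node that is not a Lyndon node
satisfies `color(L(x)) > color(x)` -/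
def LynColored : CTree → Prop
  | leaf _ => True
  | node c l r => LynColored l ∧ LynColored r ∧
      (RootLyndonB (node c l r) = true ∨ c < rootColor l)

/-- colored comb condition: every internal node whose right child is internal
satisfies `color(x) > color(R(x))` -/
def CombColored : CTree → Prop
  | leaf _ => True
  | node c l r => CombColored l ∧ CombColored r ∧ (isLeafB r = true ∨ rootColor r < c)

/-- all colors equal to `0`: an (essentially) uncolored tree. -/
def Mono : CTree → Prop
  | leaf _ => True
  | node c l r => c = 0 ∧ Mono l ∧ Mono r

/-- the tree has leaf label set `[n] = {1,…,n}` (each label once) -/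
def OnSet (n : ℕ) (T : CTree) : Prop := T.leavesList.Perm ((List.range n).map (· + 1))

/-- `lynAux T = (b, m)`: `b` is the size of the block of `π^{Lyn}` containing the
root (`0` for a leaf) and `m` is the multiset of sizes of the other blocks. -/
def lynAux : CTree → ℕ × Multiset ℕ
  | leaf _ => (0, 0)
  | node c l r =>
    let bl := (lynAux l).1
    let ml := (lynAux l).2
    let br := (lynAux r).1
    let mr := (lynAux r).2
    let closedR := mr + (if br = 0 then 0 else {br})
    if RootLyndonB (node c l r) then
      (1, ml + (if bl = 0 then 0 else {bl}) + closedR)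
    else (1 + bl, ml + closedR)

/-- the Lyndon type `λ^{Lyn}`: multiset of block sizes of `π^{Lyn}` -/
def lynType (T : CTree) : Multiset ℕ :=
  (if (lynAux T).1 = 0 then (0 : Multiset ℕ) else {(lynAux T).1}) + (lynAux T).2

def combAux : CTree → ℕ × Multiset ℕ
  | leaf _ => (0, 0)
  | node _ l r =>
    let bl := (combAux l).1
    let ml := (combAux l).2
    let br := (combAux r).1
    let mr := (combAux r).2
    (1 + br, ml + mr + (if bl = 0 then 0 else {bl}))

/-- the comb type `λ^{Comb}`: multiset of block sizes of `π^{Comb}` -/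
def combType (T : CTree) : Multiset ℕ :=
  (if (combAux T).1 = 0 then (0 : Multiset ℕ) else {(combAux T).1}) + (combAux T).2

/-- subtrees (= nodes) of a tree -/
def subtreesC : CTree → List CTree
  | leaf m => [leaf m]
  | node c l r => node c l r :: (subtreesC l ++ subtreesC r)

end CTree

/-- normalized uncolored labeled binary trees on `[n]`: the set `Nor_n`. -/
def NorSet (n : ℕ) : Set CTree :=
  {T | T.OnSet n ∧ T.Normalized ∧ T.Mono}

/-- `Lyn_μ` for a weak composition `μ` (indexed by ℕ; `μ i` is the number of
internal nodes of color `i`). -/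
def LynSet (n : ℕ) (μ : ℕ →₀ ℕ) : Set CTree :=
  {T | T.OnSet n ∧ T.Normalized ∧ T.LynColored ∧ ∀ j, T.colorCount j = μ j}

/-- `Comb_μ` -/
def CombSet (n : ℕ) (μ : ℕ →₀ ℕ) : Set CTree :=
  {T | T.OnSet n ∧ T.Normalized ∧ T.CombColored ∧ ∀ j, T.colorCount j = μ j}

/-- `Lyn_μ` for `μ ∈ wcomp` with support in `[k]`, given as `f : Fin k → ℕ`. -/
def LynSetF (n k : ℕ) (f : Fin k → ℕ) : Set CTree :=
  {T | T.OnSet n ∧ T.Normalized ∧ T.LynColored ∧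
    ∀ j : ℕ, T.colorCount j = if h : j < k then f ⟨j, h⟩ else 0}

def CombSetF (n k : ℕ) (f : Fin k → ℕ) : Set CTree :=
  {T | T.OnSet n ∧ T.Normalized ∧ T.CombColored ∧
    ∀ j : ℕ, T.colorCount j = if h : j < k then f ⟨j, h⟩ else 0}

namespace CTree

/-! ### Hybrid interpolation between the Lyndon and comb conditions -/

def lynCondB (c : ℕ) (l r : CTree) : Bool :=
  RootLyndonB (node c l r) || decide (c < rootColor l)

def combCondB (c : ℕ) (r : CTree) : Bool :=
  isLeafB r || decide (rootColor r < c)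

def hybB (k : ℕ) : CTree → Bool
  | leaf _ => true
  | node c l r => hybB k l && hybB k r &&
      (!(decide (minLeaf (right l) < k)) || lynCondB c l r) &&
      (!(decide (k ≤ minLeaf r)) || combCondB c r)

/-- one step of sinking a node down its right spine -/
def sinkAux (c' : ℕ) (A : CTree) : CTree → CTree
  | node cb B1 B2 => if c' ≤ cb then node cb (sinkAux c' A B1) B2 else node c' A (node cb B1 B2)
  | leaf m => node c' A (leaf m)

/-- the rotation applied at a node during the lifting cascade -/
def rot (q c : ℕ) (l' r : CTree) : CTree :=
  match l' with
  | leaf m => node c (leaf m) r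
  | node c' A B =>
    if minLeaf B = q ∧ q < minLeaf r ∧ c' ≤ c then node c' A (node c B r)
    else node c (node c' A B) r

/-- lift the node keyed `q` up while the Lyndon condition at its parent fails -/
def phi (q : ℕ) : CTree → CTree
  | leaf m => leaf m
  | node c l r =>
    if minLeaf r = q then node c l r
    else if q ∈ l.leavesList then rot q c (phi q l) r
    else node c l (phi q r)

/-- sink the node keyed `q` down while the comb condition at it fails -/
def psi (q : ℕ) : CTree → CTree
  | leaf m => leaf m
  | node c l r =>
    if minLeaf r = q then sinkAux c l r
    else if q ∈ l.leavesList then node c (psi q l) r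
    else node c l (psi q r)

lemma phi_node {q c : ℕ} {l r : CTree} : phi q (node c l r) =
    if r.minLeaf = q then node c l r
    else if q ∈ l.leavesList then rot q c (phi q l) r
    else node c l (phi q r) := rfl

lemma psi_node {q c : ℕ} {l r : CTree} : psi q (node c l r) =
    if r.minLeaf = q then sinkAux c l r
    else if q ∈ l.leavesList then node c (psi q l) r
    else node c l (psi q r) := rfl

/-! ### Basic lemmas -/

lemma minLeaf_mem : ∀ t : CTree, t.minLeaf ∈ t.leavesList := by
  intro t; induction t with
  | leaf m => simp [minLeaf, leavesList]
  | node c l r ihl ihr =>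
      simp only [minLeaf, leavesList, List.mem_append]
      rcases le_total (minLeaf l) (minLeaf r) with h | h
      · left; rwa [min_eq_left h]
      · right; rwa [min_eq_right h]

lemma minLeaf_le : ∀ t : CTree, ∀ v ∈ t.leavesList, t.minLeaf ≤ v := by
  intro t; induction t with
  | leaf m => intro v hv; simp [leavesList] at hv; simp [minLeaf, hv]
  | node c l r ihl ihr =>
      intro v hv
      simp only [leavesList, List.mem_append] at hv
      simp only [minLeaf]
      rcases hv with hv | hv
      · exact le_trans (min_le_left _ _) (ihl v hv)
      · exact le_trans (min_le_right _ _) (ihr v hv)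

lemma norm_minLeaf_node {c : ℕ} {l r : CTree} (h : (node c l r).Normalized) :
    (node c l r).minLeaf = l.minLeaf := by
  have h3 := h.2.2
  simp only [minLeaf]
  exact min_eq_left (le_of_lt h3)

/-- in a normalized internal tree, the min of the right subtree is strictly
bigger than the min of the tree -/
lemma norm_right_gt {c : ℕ} {l r : CTree} (h : (node c l r).Normalized) :
    (node c l r).minLeaf < r.minLeaf := by
  rw [norm_minLeaf_node h]; exact h.2.2


@[simp] lemma normalized_node {c : ℕ} {l r : CTree} :
    (node c l r).Normalized ↔ l.Normalized ∧ r.Normalized ∧ l.minLeaf < r.minLeaf :=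
  Iff.rfl

@[simp] lemma normalized_leaf {m : ℕ} : (leaf m).Normalized ↔ True := Iff.rfl

@[simp] lemma minLeaf_leaf {m : ℕ} : (leaf m).minLeaf = m := rfl

@[simp] lemma minLeaf_node {c : ℕ} {l r : CTree} :
    (node c l r).minLeaf = min l.minLeaf r.minLeaf := rfl

@[simp] lemma leavesList_leaf {m : ℕ} : (leaf m).leavesList = [m] := rfl

@[simp] lemma leavesList_node {c : ℕ} {l r : CTree} :
    (node c l r).leavesList = l.leavesList ++ r.leavesList := rfl

end CTree
namespace CTree

/-! ### Preservation lemmas -/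

lemma leaves_sinkAux (c' : ℕ) (A : CTree) : ∀ B : CTree,
    (sinkAux c' A B).leavesList = A.leavesList ++ B.leavesList := by
  intro B
  induction B generalizing A with
  | leaf m => simp [sinkAux]
  | node cb B1 B2 ih1 ih2 =>
      by_cases h : c' ≤ cb
      · simp [sinkAux, if_pos h, ih1]
      · simp [sinkAux, if_neg h]

lemma minLeaf_sinkAux (c' : ℕ) (A : CTree) : ∀ B : CTree,
    (sinkAux c' A B).minLeaf = min A.minLeaf B.minLeaf := by
  intro B
  induction B generalizing A with
  | leaf m => simp [sinkAux]
  | node cb B1 B2 ih1 ih2 =>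
      by_cases h : c' ≤ cb
      · simp [sinkAux, if_pos h, ih1, min_assoc]
      · simp [sinkAux, if_neg h]

lemma colorCount_sinkAux (c' : ℕ) (A : CTree) : ∀ (B : CTree) (j : ℕ),
    (sinkAux c' A B).colorCount j = (node c' A B).colorCount j := by
  intro B
  induction B generalizing A with
  | leaf m => intro j; simp [sinkAux]
  | node cb B1 B2 ih1 ih2 =>
      intro j
      by_cases h : c' ≤ cb
      · simp only [sinkAux, if_pos h, colorCount, ih1]
        omega
      · simp [sinkAux, if_neg h]

lemma norm_sinkAux (c' : ℕ) : ∀ (B A : CTree), A.Normalized → B.Normalized →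
    A.minLeaf < B.minLeaf → (sinkAux c' A B).Normalized := by
  intro B
  induction B with
  | leaf m => intro A hA hB hlt; exact ⟨hA, trivial, hlt⟩
  | node cb B1 B2 ih1 ih2 =>
      intro A hA hB hlt
      simp only [minLeaf_node] at hlt
      by_cases h : c' ≤ cb
      · simp only [sinkAux, if_pos h, normalized_node]
        have hm : A.minLeaf < B1.minLeaf := lt_of_lt_of_le hlt (min_le_left _ _)
        refine ⟨ih1 A hA hB.1 hm, hB.2.1, ?_⟩
        rw [minLeaf_sinkAux]
        have h2 := hB.2.2
        simp only [lt_min_iff, min_lt_iff]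
        omega
      · simp only [sinkAux, if_neg h, normalized_node]
        exact ⟨hA, hB, by simp only [minLeaf_node]; exact hlt⟩

lemma leaves_phi (q : ℕ) : ∀ t : CTree, (phi q t).leavesList = t.leavesList := by
  intro t
  induction t with
  | leaf m => simp [phi]
  | node c l r ihl ihr =>
      by_cases h1 : r.minLeaf = q
      · simp [phi, if_pos h1]
      · by_cases h2 : q ∈ l.leavesList
        · simp only [phi, if_neg h1, if_pos h2]
          rcases hl' : phi q l with m | ⟨c', A, B⟩ <;> rw [hl'] at ihl
          · simp only [rot, leavesList_node, leavesList_leaf]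
            simp only [leavesList_leaf] at ihl
            rw [ihl]
          · simp only [leavesList_node] at ihl
            by_cases h3 : B.minLeaf = q ∧ q < r.minLeaf ∧ c' ≤ c
            · simp only [rot, if_pos h3, leavesList_node]
              rw [← ihl, List.append_assoc]
            · simp only [rot, if_neg h3, leavesList_node]
              rw [ihl]
        · simp [phi, if_neg h1, if_neg h2, ihr]

lemma minLeaf_phi (q : ℕ) : ∀ t : CTree, (phi q t).minLeaf = t.minLeaf := by
  intro t
  induction t with
  | leaf m => simp [phi]
  | node c l r ihl ihr =>
      by_cases h1 : r.minLeaf = q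
      · simp [phi, if_pos h1]
      · by_cases h2 : q ∈ l.leavesList
        · simp only [phi, if_neg h1, if_pos h2]
          rcases hl' : phi q l with m | ⟨c', A, B⟩ <;> rw [hl'] at ihl
          · simp only [rot, minLeaf_node, minLeaf_leaf]
            simp only [minLeaf_leaf] at ihl
            rw [ihl]
          · simp only [minLeaf_node] at ihl
            by_cases h3 : B.minLeaf = q ∧ q < r.minLeaf ∧ c' ≤ c
            · simp only [rot, if_pos h3, minLeaf_node]
              rw [← ihl, min_assoc]
            · simp only [rot, if_neg h3, minLeaf_node]
              rw [ihl]
        · simp [phi, if_neg h1, if_neg h2, ihr]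

lemma colorCount_phi (q : ℕ) : ∀ (t : CTree) (j : ℕ),
    (phi q t).colorCount j = t.colorCount j := by
  intro t
  induction t with
  | leaf m => intro j; simp [phi]
  | node c l r ihl ihr =>
      intro j
      by_cases h1 : r.minLeaf = q
      · simp [phi, if_pos h1]
      · by_cases h2 : q ∈ l.leavesList
        · simp only [phi, if_neg h1, if_pos h2]
          rcases hl' : phi q l with m | ⟨c', A, B⟩ <;> have hc := ihl j <;> rw [hl'] at hc
          · simp only [rot, colorCount]
            simp only [colorCount] at hc
            omega
          · simp only [colorCount] at hc
            by_cases h3 : B.minLeaf = q ∧ q < r.minLeaf ∧ c' ≤ c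
            · simp only [rot, if_pos h3, colorCount]; omega
            · simp only [rot, if_neg h3, colorCount]; omega
        · simp only [phi, if_neg h1, if_neg h2, colorCount, ihr]

lemma norm_phi (q : ℕ) : ∀ t : CTree, t.Normalized → (phi q t).Normalized := by
  intro t
  induction t with
  | leaf m => intro _; trivial
  | node c l r ihl ihr =>
      intro hn
      by_cases h1 : r.minLeaf = q
      · simpa [phi, if_pos h1] using hn
      · by_cases h2 : q ∈ l.leavesList
        · simp only [phi, if_neg h1, if_pos h2]
          have hnl' : (phi q l).Normalized := ihl hn.1
          have hml : (phi q l).minLeaf = l.minLeaf := minLeaf_phi q l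
          rcases hl' : phi q l with m | ⟨c', A, B⟩ <;> rw [hl'] at hnl' hml
          · refine ⟨trivial, hn.2.1, ?_⟩
            simp only [minLeaf_leaf] at hml ⊢
            have := hn.2.2; omega
          · simp only [minLeaf_node] at hml
            by_cases h3 : B.minLeaf = q ∧ q < r.minLeaf ∧ c' ≤ c
            · simp only [rot, if_pos h3, normalized_node]
              have h4 := hnl'.2.2
              refine ⟨hnl'.1, ⟨hnl'.2.1, hn.2.1, by rw [h3.1]; exact h3.2.1⟩, ?_⟩
              simp only [minLeaf_node]
              rw [h3.1] at h4 ⊢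
              simp only [lt_min_iff]
              exact ⟨h4, lt_trans h4 h3.2.1⟩
            · simp only [rot, if_neg h3, normalized_node]
              refine ⟨hnl', hn.2.1, ?_⟩
              simp only [minLeaf_node]
              rw [hml]
              have := hn.2.2
              exact this
        · simp only [phi, if_neg h1, if_neg h2, normalized_node]
          refine ⟨hn.1, ihr hn.2.1, ?_⟩
          rw [minLeaf_phi]; exact hn.2.2

lemma leaves_psi (q : ℕ) : ∀ t : CTree, (psi q t).leavesList = t.leavesList := by
  intro t
  induction t with
  | leaf m => simp [psi]
  | node c l r ihl ihr =>
      by_cases h1 : r.minLeaf = q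
      · simp only [psi, if_pos h1]
        rw [leaves_sinkAux]; rfl
      · by_cases h2 : q ∈ l.leavesList
        · simp [psi, if_neg h1, if_pos h2, ihl]
        · simp [psi, if_neg h1, if_neg h2, ihr]

lemma minLeaf_psi (q : ℕ) : ∀ t : CTree, (psi q t).minLeaf = t.minLeaf := by
  intro t
  induction t with
  | leaf m => simp [psi]
  | node c l r ihl ihr =>
      by_cases h1 : r.minLeaf = q
      · simp only [psi, if_pos h1]
        rw [minLeaf_sinkAux]; rfl
      · by_cases h2 : q ∈ l.leavesList
        · simp [psi, if_neg h1, if_pos h2, ihl]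
        · simp [psi, if_neg h1, if_neg h2, ihr]

lemma colorCount_psi (q : ℕ) : ∀ (t : CTree) (j : ℕ),
    (psi q t).colorCount j = t.colorCount j := by
  intro t
  induction t with
  | leaf m => intro j; simp [psi]
  | node c l r ihl ihr =>
      intro j
      by_cases h1 : r.minLeaf = q
      · simp only [psi, if_pos h1]
        rw [colorCount_sinkAux]
      · by_cases h2 : q ∈ l.leavesList
        · simp [psi, if_neg h1, if_pos h2, colorCount, ihl]
        · simp [psi, if_neg h1, if_neg h2, colorCount, ihr]

lemma norm_psi (q : ℕ) : ∀ t : CTree, t.Normalized → (psi q t).Normalized := by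
  intro t
  induction t with
  | leaf m => intro _; trivial
  | node c l r ihl ihr =>
      intro hn
      by_cases h1 : r.minLeaf = q
      · simp only [psi, if_pos h1]
        exact norm_sinkAux c r l hn.1 hn.2.1 hn.2.2
      · by_cases h2 : q ∈ l.leavesList
        · simp only [psi, if_neg h1, if_pos h2, normalized_node]
          refine ⟨ihl hn.1, hn.2.1, ?_⟩
          rw [minLeaf_psi]; exact hn.2.2
        · simp only [psi, if_neg h1, if_neg h2, normalized_node]
          refine ⟨hn.1, ihr hn.2.1, ?_⟩
          rw [minLeaf_psi]; exact hn.2.2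

end CTree
namespace CTree

/-! ### hybB basics -/

@[simp] lemma hybB_leaf {k m : ℕ} : hybB k (leaf m) = true := rfl

lemma hybB_node {k c : ℕ} {l r : CTree} : hybB k (node c l r) = true ↔
    hybB k l = true ∧ hybB k r = true ∧
    ((right l).minLeaf < k → lynCondB c l r = true) ∧
    (k ≤ r.minLeaf → combCondB c r = true) := by
  simp only [hybB, Bool.and_eq_true, Bool.or_eq_true, Bool.not_eq_true',
    decide_eq_false_iff_not, decide_eq_true_eq]
  constructor
  · rintro ⟨⟨⟨h1, h2⟩, h3⟩, h4⟩
    refine ⟨h1, h2, ?_, ?_⟩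
    · intro h; rcases h3 with h' | h'
      · exact absurd h h'
      · exact h'
    · intro h; rcases h4 with h' | h'
      · exact absurd h h'
      · exact h'
  · rintro ⟨h1, h2, h3, h4⟩
    refine ⟨⟨⟨h1, h2⟩, ?_⟩, ?_⟩
    · by_cases h : (right l).minLeaf < k
      · exact Or.inr (h3 h)
      · exact Or.inl h
    · by_cases h : k ≤ r.minLeaf
      · exact Or.inr (h4 h)
      · exact Or.inl h

lemma lynCondB_eq {c : ℕ} {l r : CTree} :
    lynCondB c l r = true ↔
      (isLeafB l = true ∨ r.minLeaf < (right l).minLeaf ∨ c < rootColor l) := by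
  simp only [lynCondB, RootLyndonB, Bool.or_eq_true, decide_eq_true_eq]
  cases l <;> simp [left, right, isLeafB, or_assoc]

lemma lynCondB_leaf {c m : ℕ} {r : CTree} : lynCondB c (leaf m) r = true := by
  rw [lynCondB_eq]; left; rfl

lemma lynCondB_node {c c' : ℕ} {A B r : CTree} :
    lynCondB c (node c' A B) r = true ↔ (r.minLeaf < B.minLeaf ∨ c < c') := by
  rw [lynCondB_eq]
  simp [isLeafB, right, rootColor]

lemma combCondB_eq {c : ℕ} {r : CTree} :
    combCondB c r = true ↔ (isLeafB r = true ∨ rootColor r < c) := by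
  simp [combCondB, Bool.or_eq_true, decide_eq_true_eq]

lemma combCondB_leaf {c m : ℕ} : combCondB c (leaf m) = true := rfl

lemma combCondB_node {c cb : ℕ} {B1 B2 : CTree} :
    combCondB c (node cb B1 B2) = true ↔ cb < c := by
  simp [combCondB_eq, isLeafB, rootColor]

lemma minLeaf_right_mem : ∀ t : CTree, (right t).minLeaf ∈ t.leavesList := by
  intro t
  cases t with
  | leaf m => simp [right]
  | node c l r =>
      simp only [right, leavesList_node, List.mem_append]
      exact Or.inr (minLeaf_mem r)

/-- away from the key `q`, the hybrid conditions for `q` and `q+1` agree -/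
lemma hyb_succ_notmem {q : ℕ} : ∀ t : CTree, q ∉ t.leavesList →
    (hybB q t = true ↔ hybB (q+1) t = true) := by
  intro t
  induction t with
  | leaf m => simp
  | node c l r ihl ihr =>
      intro hq
      simp only [leavesList_node, List.mem_append] at hq
      push_neg at hq
      have h1 : (right l).minLeaf ≠ q := by
        intro h; exact hq.1 (h ▸ minLeaf_right_mem l)
      have h2 : r.minLeaf ≠ q := by
        intro h; exact hq.2 (h ▸ minLeaf_mem r)
      rw [hybB_node, hybB_node, ihl hq.1, ihr hq.2]
      constructor
      · rintro ⟨a, b, c1, c2⟩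
        exact ⟨a, b, fun h => c1 (by omega), fun h => c2 (by omega)⟩
      · rintro ⟨a, b, c1, c2⟩
        exact ⟨a, b, fun h => c1 (by omega), fun h => c2 (by omega)⟩

/-- below the key `q` (all leaves ≥ q, normalized) the hybrid conditions
for `q` and `q+1` agree -/
lemma hyb_succ_ge {q : ℕ} : ∀ t : CTree, t.Normalized → (∀ v ∈ t.leavesList, q ≤ v) →
    (hybB q t = true ↔ hybB (q+1) t = true) := by
  intro t
  induction t with
  | leaf m => simp
  | node c l r ihl ihr =>
      intro hn hge
      have hgel : ∀ v ∈ l.leavesList, q ≤ v := fun v hv => hge v (by simp [hv])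
      have hger : ∀ v ∈ r.leavesList, q ≤ v := fun v hv => hge v (by simp [hv])
      have hminl : q ≤ l.minLeaf := hgel _ (minLeaf_mem l)
      have hminr : q ≤ r.minLeaf := hger _ (minLeaf_mem r)
      have hrgt : q < r.minLeaf := lt_of_le_of_lt hminl hn.2.2
      rw [hybB_node, hybB_node, ihl hn.1 hgel, ihr hn.2.1 hger]
      have hA : ∀ k, ((right l).minLeaf < k → lynCondB c l r = true) ↔
          ((right l).minLeaf < k → lynCondB c l r = true) := fun _ => Iff.rfl
      constructor
      · rintro ⟨a, b, c1, c2⟩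
        refine ⟨a, b, ?_, fun h => c2 (by omega)⟩
        intro h
        cases l with
        | leaf m => exact lynCondB_leaf
        | node c' A B =>
            have h1 : q ≤ A.minLeaf := hgel _ (by simp [minLeaf_mem A])
            have h2 : A.minLeaf < B.minLeaf := hn.1.2.2
            simp only [right] at h
            exact ((by omega : False)).elim
      · rintro ⟨a, b, c1, c2⟩
        exact ⟨a, b, fun h => c1 (by omega), fun h => c2 (by omega)⟩

lemma phi_notmem {q : ℕ} : ∀ t : CTree, q ∉ t.leavesList → phi q t = t := by
  intro t
  induction t with
  | leaf m => intro _; rfl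
  | node c l r ihl ihr =>
      intro hq
      simp only [leavesList_node, List.mem_append] at hq
      push_neg at hq
      have h2 : r.minLeaf ≠ q := fun h => hq.2 (h ▸ minLeaf_mem r)
      simp only [phi, if_neg h2, if_neg hq.1, ihr hq.2]

lemma psi_notmem {q : ℕ} : ∀ t : CTree, q ∉ t.leavesList → psi q t = t := by
  intro t
  induction t with
  | leaf m => intro _; rfl
  | node c l r ihl ihr =>
      intro hq
      simp only [leavesList_node, List.mem_append] at hq
      push_neg at hq
      have h2 : r.minLeaf ≠ q := fun h => hq.2 (h ▸ minLeaf_mem r)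
      simp only [psi, if_neg h2, if_neg hq.1, ihr hq.2]

end CTree
namespace CTree

lemma lynCondB_congr {c : ℕ} {l r r' : CTree} (h : r'.minLeaf = r.minLeaf) :
    lynCondB c l r' = lynCondB c l r := by
  have h' : (right (node c l r')).minLeaf = (right (node c l r)).minLeaf := h
  unfold lynCondB RootLyndonB; rw [h']; rfl

lemma phi_root (q : ℕ) : ∀ t : CTree,
    ((right (phi q t)).minLeaf = q) ∨
    (rootColor (phi q t) = rootColor t ∧ (right (phi q t)).minLeaf = (right t).minLeaf ∧
      isLeafB (phi q t) = isLeafB t) := by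
  intro t
  cases t with
  | leaf m => right; exact ⟨rfl, rfl, rfl⟩
  | node c l r =>
      by_cases h1 : r.minLeaf = q
      · right; simp [phi, if_pos h1]
      · by_cases h2 : q ∈ l.leavesList
        · simp only [phi, if_neg h1, if_pos h2]
          rcases hl' : phi q l with m | ⟨c', A, B⟩
          · right; simp [rot, right, rootColor, isLeafB]
          · by_cases h3 : B.minLeaf = q ∧ q < r.minLeaf ∧ c' ≤ c
            · left
              simp only [rot, if_pos h3, right, minLeaf_node]
              rw [h3.1]
              exact min_eq_left (le_of_lt h3.2.1)
            · right; simp [rot, if_neg h3, right, rootColor, isLeafB]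
        · right
          refine ⟨?_, ?_, ?_⟩
          · simp [phi, if_neg h1, if_neg h2, rootColor]
          · simp only [phi, if_neg h1, if_neg h2, right]
            exact minLeaf_phi q r
          · simp [phi, if_neg h1, if_neg h2, isLeafB]

lemma phi_main (q : ℕ) : ∀ s : CTree, s.Normalized → s.leavesList.Nodup →
    hybB q s = true →
    (hybB (q+1) s = true → phi q s = s) ∧
    (hybB (q+1) s = false → hybB (q+1) (phi q s) = true ∧ hybB q (phi q s) = false ∧
      psi q (phi q s) = s) := by
  intro s
  induction s with
  | leaf m =>
      intro _ _ _
      exact ⟨fun _ => rfl, fun h => by simp at h⟩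
  | node c l r ihl ihr =>
      intro hn hd hq
      rw [hybB_node] at hq
      obtain ⟨hql, hqr, hqA, hqB⟩ := hq
      have hd' := (List.nodup_append'.mp (by simpa using hd))
      have hdl : l.leavesList.Nodup := hd'.1
      have hdr : r.leavesList.Nodup := hd'.2.1
      have hdisj : ∀ x, x ∈ l.leavesList → x ∉ r.leavesList := fun x hx hx' => hd'.2.2 hx hx'
      by_cases h1 : r.minLeaf = q
      · -- the key node is the root; nothing moves
        have hphis : phi q (node c l r) = node c l r := by simp [phi, if_pos h1]
        have hqnotl : q ∉ l.leavesList := fun hx => hdisj q hx (h1 ▸ minLeaf_mem r)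
        have hs1 : hybB (q+1) (node c l r) = true := by
          rw [hybB_node]
          refine ⟨(hyb_succ_notmem l hqnotl).mp hql,
            (hyb_succ_ge r hn.2.1 (fun v hv => h1 ▸ minLeaf_le r v hv)).mp hqr, ?_, ?_⟩
          · intro h
            have hne : (right l).minLeaf ≠ q := fun hh => hqnotl (hh ▸ minLeaf_right_mem l)
            exact hqA (by omega)
          · intro h; omega
        exact ⟨fun _ => hphis, fun hfalse => absurd hs1 (by simp [hfalse])⟩
      · by_cases h2 : q ∈ l.leavesList
        · -- the key node is inside l
          have hqnotr : q ∉ r.leavesList := fun hx => hdisj q h2 hx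
          have hrminne : r.minLeaf ≠ q := h1
          have hphis : phi q (node c l r) = rot q c (phi q l) r := by
            simp [phi, if_neg h1, if_pos h2]
          have hrsame : hybB (q+1) r = true := (hyb_succ_notmem r hqnotr).mp hqr
          by_cases hl1 : hybB (q+1) l = true
          · -- no move inside l
            have hphil : phi q l = l := (ihl hn.1 hdl hql).1 hl1
            cases l with
            | leaf m =>
                have hphis2 : phi q (node c (leaf m) r) = node c (leaf m) r := by
                  rw [hphis, hphil]; rfl
                have hs1 : hybB (q+1) (node c (leaf m) r) = true := by
                  rw [hybB_node]
                  refine ⟨by simp, hrsame, fun _ => lynCondB_leaf, fun h => hqB (by omega)⟩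
                exact ⟨fun _ => hphis2, fun hfalse => absurd hs1 (by simp [hfalse])⟩
            | node c' A B =>
                rw [hphil] at hphis
                by_cases h3 : B.minLeaf = q ∧ q < r.minLeaf ∧ c' ≤ c
                · -- a single rotation at the root
                  have hsstar : phi q (node c (node c' A B) r) =
                      node c' A (node c B r) := by rw [hphis]; simp [rot, if_pos h3]
                  rw [hybB_node] at hql hl1
                  have hnormB : B.Normalized := hn.1.2.1
                  -- s is not in hyb (q+1)
                  have hsnot : hybB (q+1) (node c (node c' A B) r) ≠ true := by
                    intro hcontra
                    rw [hybB_node] at hcontra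
                    obtain ⟨-, -, hA', -⟩ := hcontra
                    have : lynCondB c (node c' A B) r = true := by
                      apply hA'
                      simp only [right]; omega
                    rw [lynCondB_node] at this
                    rcases this with h' | h'
                    · omega
                    · omega
                  refine ⟨fun htrue => absurd htrue hsnot, fun _ => ?_⟩
                  refine ⟨?_, ?_, ?_⟩
                  · -- φ s ∈ hyb (q+1)
                    rw [hsstar, hybB_node]
                    refine ⟨hl1.1, ?_, ?_, ?_⟩
                    · rw [hybB_node]
                      refine ⟨hl1.2.1, hrsame, ?_, fun _ => hqB (by omega)⟩
                      · intro hB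
                        cases B with
                        | leaf mb => exact lynCondB_leaf
                        | node cb B1 B2 =>
                            have := norm_right_gt hnormB
                            simp only [right] at hB
                            rw [norm_minLeaf_node hnormB] at this
                            have hBq : (node cb B1 B2).minLeaf = q := h3.1
                            rw [norm_minLeaf_node hnormB] at hBq
                            exact absurd hB (by omega)
                    · intro hA'
                      have hly := hl1.2.2.1 hA'
                      have : min B.minLeaf r.minLeaf = B.minLeaf := by
                        rw [h3.1]; exact min_eq_left (le_of_lt h3.2.1)
                      rwa [lynCondB_congr (r := B) (by simp [this])]
                    · intro habs
                      simp only [minLeaf_node, h3.1] at habs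
                      omega
                  · -- φ s ∉ hyb q
                    rw [hsstar, Bool.eq_false_iff]
                    intro hcontra
                    rw [hybB_node] at hcontra
                    obtain ⟨-, -, -, hB'⟩ := hcontra
                    have : combCondB c' (node c B r) = true := by
                      apply hB'
                      simp only [minLeaf_node, h3.1]
                      omega
                    rw [combCondB_node] at this
                    omega
                  · -- ψ ∘ φ = id
                    rw [hsstar]
                    have hmin : (node c B r).minLeaf = q := by
                      simp only [minLeaf_node, h3.1]
                      exact min_eq_left (le_of_lt h3.2.1)
                    rw [psi_node, if_pos hmin]
                    have hsink : sinkAux c' A (node c B r) = node c (sinkAux c' A B) r := by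
                      simp only [sinkAux, if_pos h3.2.2]
                    rw [hsink]
                    have hstop : sinkAux c' A B = node c' A B := by
                      cases B with
                      | leaf mb => rfl
                      | node cb B1 B2 =>
                          have hcomb : combCondB c' (node cb B1 B2) = true :=
                            hql.2.2.2 (le_of_eq h3.1.symm)
                          rw [combCondB_node] at hcomb
                          simp [sinkAux, if_neg (by omega : ¬ c' ≤ cb)]
                    rw [hstop]
                · -- no rotation: s itself is in hyb (q+1)
                  have hphis2 : phi q (node c (node c' A B) r) = node c (node c' A B) r := by
                    rw [hphis]; simp [rot, if_neg h3]
                  have hs1 : hybB (q+1) (node c (node c' A B) r) = true := by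
                    rw [hybB_node]
                    refine ⟨hl1, hrsame, ?_, fun h => hqB (by omega)⟩
                    intro hA'
                    simp only [right] at hA'
                    by_cases hBq : B.minLeaf = q
                    · rw [lynCondB_node]
                      rcases Nat.lt_or_ge q r.minLeaf with hlt | hge
                      · have : ¬ c' ≤ c := fun hcc => h3 ⟨hBq, hlt, hcc⟩
                        omega
                      · left; omega
                    · exact hqA (by simp only [right]; omega)
                  exact ⟨fun _ => hphis2, fun hfalse => absurd hs1 (by simp [hfalse])⟩
          · -- the cascade moved inside l
            have hl1' : hybB (q+1) l = false := by simpa using hl1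
            obtain ⟨hup, hdown, hpsil⟩ := (ihl hn.1 hdl hql).2 hl1'
            have hsnot : hybB (q+1) (node c l r) ≠ true := by
              intro hcon
              rw [hybB_node] at hcon
              simp [hcon.1] at hl1'
            have hnorml' : (phi q l).Normalized := norm_phi q l hn.1
            have hminl' : (phi q l).minLeaf = l.minLeaf := minLeaf_phi q l
            have hleavesl' : (phi q l).leavesList = l.leavesList := leaves_phi q l
            refine ⟨fun htrue => absurd htrue hsnot, fun _ => ?_⟩
            rcases hl' : phi q l with m | ⟨c', A, B⟩
            · -- impossible: phi q l a leaf would be in hyb q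
              rw [hl'] at hdown; simp at hdown
            · rw [hl'] at hup hdown hpsil hnorml' hminl' hleavesl'
              by_cases h3 : B.minLeaf = q ∧ q < r.minLeaf ∧ c' ≤ c
              · -- rotation at the root after the cascade
                have hsstar : phi q (node c l r) = node c' A (node c B r) := by
                  rw [hphis, hl']; simp [rot, if_pos h3]
                rw [hybB_node] at hup
                have hnormB : B.Normalized := hnorml'.2.1
                refine ⟨?_, ?_, ?_⟩
                · rw [hsstar, hybB_node]
                  refine ⟨hup.1, ?_, ?_, ?_⟩
                  · rw [hybB_node]
                    refine ⟨hup.2.1, hrsame, ?_, fun _ => hqB (by omega)⟩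
                    intro hB
                    cases B with
                    | leaf mb => exact lynCondB_leaf
                    | node cb B1 B2 =>
                        have := norm_right_gt hnormB
                        simp only [right] at hB
                        rw [norm_minLeaf_node hnormB] at this
                        have hBq : (node cb B1 B2).minLeaf = q := h3.1
                        rw [norm_minLeaf_node hnormB] at hBq
                        exact absurd hB (by omega)
                  · intro hA'
                    have hly := hup.2.2.1 hA'
                    have : min B.minLeaf r.minLeaf = B.minLeaf := by
                      rw [h3.1]; exact min_eq_left (le_of_lt h3.2.1)
                    rwa [lynCondB_congr (r := B) (by simp [this])]
                  · intro habs
                    simp only [minLeaf_node, h3.1] at habs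
                    omega
                · rw [hsstar, Bool.eq_false_iff]
                  intro hcontra
                  rw [hybB_node] at hcontra
                  obtain ⟨-, -, -, hB'⟩ := hcontra
                  have : combCondB c' (node c B r) = true := by
                    apply hB'
                    simp only [minLeaf_node, h3.1]
                    omega
                  rw [combCondB_node] at this
                  omega
                · rw [hsstar]
                  have hmin : (node c B r).minLeaf = q := by
                    simp only [minLeaf_node, h3.1]
                    exact min_eq_left (le_of_lt h3.2.1)
                  rw [psi_node, if_pos hmin]
                  have hsink : sinkAux c' A (node c B r) = node c (sinkAux c' A B) r := by
                    simp only [sinkAux, if_pos h3.2.2]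
                  rw [hsink]
                  have hx : sinkAux c' A B = l := by
                    have h5 := hpsil
                    rw [psi_node, if_pos h3.1] at h5
                    exact h5
                  rw [hx]
              · -- the cascade stopped inside l
                have hsstar : phi q (node c l r) = node c (node c' A B) r := by
                  rw [hphis, hl']; simp [rot, if_neg h3]
                refine ⟨?_, ?_, ?_⟩
                · rw [hsstar, hybB_node]
                  refine ⟨hup, hrsame, ?_, fun h => hqB (by omega)⟩
                  intro hA'
                  simp only [right] at hA'
                  by_cases hBq : B.minLeaf = q
                  · -- q at the root of phi l, but the lyndon condition holds
                    rw [lynCondB_node]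
                    rcases Nat.lt_or_ge q r.minLeaf with hlt | hge
                    · have : ¬ c' ≤ c := fun hcc => h3 ⟨hBq, hlt, hcc⟩
                      omega
                    · left; omega
                  · -- root data preserved: transfer the condition from s
                    rcases phi_root q l with hr1 | ⟨hr2, hr3, hr4⟩
                    · rw [hl'] at hr1; simp only [right] at hr1; omega
                    · rw [hl'] at hr2 hr3 hr4
                      simp only [right] at hr3
                      cases l with
                      | leaf m => simp [isLeafB] at hr4
                      | node c0 l0 r0 =>
                          simp only [rootColor] at hr2
                          simp only [right] at hr3
                          have hly := hqA (by simp only [right]; omega)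
                          rw [lynCondB_node] at hly ⊢
                          rw [hr2, hr3]
                          exact hly
                · rw [hsstar, Bool.eq_false_iff]
                  intro hcon
                  rw [hybB_node] at hcon
                  obtain ⟨hcontra, -⟩ := hcon
                  simp [hcontra] at hdown
                · rw [hsstar]
                  have hql' : q ∈ (node c' A B).leavesList := by
                    rw [hleavesl']; exact h2
                  rw [psi_node, if_neg h1, if_pos hql', hpsil]
        · -- the key node is inside r (or absent)
          have hphis : phi q (node c l r) = node c l (phi q r) := by
            simp [phi, if_neg h1, if_neg h2]
          by_cases hmem : q ∈ r.leavesList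
          · have hminr_lt : r.minLeaf < q := lt_of_le_of_ne (minLeaf_le r q hmem) h1
            have hlsame : hybB (q+1) l = true := (hyb_succ_notmem l h2).mp hql
            have hAne : (right l).minLeaf ≠ q := fun hh => h2 (hh ▸ minLeaf_right_mem l)
            constructor
            · intro htrue
              rw [hybB_node] at htrue
              rw [hphis, (ihr hn.2.1 hdr hqr).1 htrue.2.1]
            · intro hfalse
              have hr1 : hybB (q+1) r = false := by
                by_contra hr2
                have hr2' : hybB (q+1) r = true := by simpa using hr2
                have : hybB (q+1) (node c l r) = true := by
                  rw [hybB_node]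
                  refine ⟨hlsame, hr2', fun h => hqA (by omega), fun h => by omega⟩
                simp [this] at hfalse
              obtain ⟨hup, hdown, hpsir⟩ := (ihr hn.2.1 hdr hqr).2 hr1
              have hminr' : (phi q r).minLeaf = r.minLeaf := minLeaf_phi q r
              refine ⟨?_, ?_, ?_⟩
              · rw [hphis, hybB_node]
                refine ⟨hlsame, hup, ?_, ?_⟩
                · intro h
                  rw [lynCondB_congr hminr']
                  exact hqA (by omega)
                · intro h; rw [hminr'] at h; omega
              · rw [hphis, Bool.eq_false_iff]
                intro hcon
                rw [hybB_node] at hcon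
                simp [hcon.2.1] at hdown
              · rw [hphis]
                have hne : (phi q r).minLeaf ≠ q := by rw [hminr']; exact h1
                rw [psi_node, if_neg hne, if_neg h2, hpsir]
          · -- q does not occur at all
            have hnot : q ∉ (node c l r).leavesList := by
              simp only [leavesList_node, List.mem_append]
              rintro (h | h)
              · exact h2 h
              · exact hmem h
            have heq := hyb_succ_notmem (node c l r) hnot
            refine ⟨fun _ => by rw [phi_notmem _ hnot], fun hfalse => ?_⟩
            have : hybB (q+1) (node c l r) = true :=
              heq.mp (by rw [hybB_node]; exact ⟨hql, hqr, hqA, hqB⟩)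
            simp [this] at hfalse

end CTree
namespace CTree

lemma sink_main (q : ℕ) : ∀ (B A : CTree) (c' : ℕ), (node c' A B).Normalized →
    (node c' A B).leavesList.Nodup → B.minLeaf = q → hybB (q+1) (node c' A B) = true →
    (combCondB c' B = true → sinkAux c' A B = node c' A B) ∧
    (combCondB c' B = false →
      hybB q (sinkAux c' A B) = true ∧ hybB (q+1) (sinkAux c' A B) = false ∧
      phi q (sinkAux c' A B) = node c' A B ∧ q < (right (sinkAux c' A B)).minLeaf) := by
  intro B
  induction B with
  | leaf m =>
      intro A c' _ _ _ _
      exact ⟨fun _ => rfl, fun h => by simp [combCondB_leaf] at h⟩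
  | node cb B1 B2 ih1 ih2 =>
      intro A c' hn hd hBq hq1
      constructor
      · intro hcomb
        rw [combCondB_node] at hcomb
        simp [sinkAux, if_neg (by omega : ¬ c' ≤ cb)]
      · intro hcomb
        have hcb : c' ≤ cb := by
          by_contra hcb
          rw [Bool.eq_false_iff] at hcomb
          exact hcomb (combCondB_node.mpr (by omega))
        have hsink : sinkAux c' A (node cb B1 B2) = node cb (sinkAux c' A B1) B2 := by
          simp only [sinkAux, if_pos hcb]
        rw [hybB_node] at hq1
        obtain ⟨hA, hB, hAcond, _⟩ := hq1
        have hnormB : (node cb B1 B2).Normalized := hn.2.1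
        have minB1 : B1.minLeaf = q := by
          have := norm_minLeaf_node hnormB
          omega
        have minB2 : q < B2.minLeaf := by
          have := hnormB.2.2
          omega
        rw [hybB_node] at hB
        obtain ⟨hB1, hB2, hBA, hBB⟩ := hB
        -- nodup decompositions
        have hd0 : (A.leavesList ++ (B1.leavesList ++ B2.leavesList)).Nodup := by
          simpa using hd
        have hdA := (List.nodup_append'.mp hd0).1
        have hdBB := (List.nodup_append'.mp hd0).2.1
        have hdisjA := (List.nodup_append'.mp hd0).2.2
        have hdB1 := (List.nodup_append'.mp hdBB).1
        have hdB2 := (List.nodup_append'.mp hdBB).2.1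
        have hdisjB := (List.nodup_append'.mp hdBB).2.2
        have hqB1 : q ∈ B1.leavesList := minB1 ▸ minLeaf_mem B1
        have hqnA : q ∉ A.leavesList := fun hx => hdisjA hx (by simp [hqB1])
        have hqnB2 : q ∉ B2.leavesList := fun hx => hdisjB hqB1 hx
        -- the smaller tree node c' A B1
        have hnt1 : (node c' A B1).Normalized := by
          refine ⟨hn.1, hnormB.1, ?_⟩
          have := hn.2.2
          omega
        have hdt1 : (node c' A B1).leavesList.Nodup := by
          simp only [leavesList_node]
          rw [List.nodup_append']
          exact ⟨hdA, hdB1, fun x hx hx' => hdisjA hx (by simp [hx'])⟩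
        have hqt1 : hybB (q+1) (node c' A B1) = true := by
          rw [hybB_node]
          refine ⟨hA, hB1, ?_, ?_⟩
          · intro h
            have hmin : B1.minLeaf = (node cb B1 B2).minLeaf := by
              rw [norm_minLeaf_node hnormB]
            rw [lynCondB_congr hmin]
            exact hAcond h
          · intro h; omega
        -- root data for result
        have hcombB2 : combCondB cb B2 = true := hBB (by omega)
        have hqB2' : hybB q B2 = true := (hyb_succ_notmem B2 hqnB2).mpr hB2
        by_cases hc1 : combCondB c' B1 = true
        · -- the sink stops after one step
          have hstop : sinkAux c' A B1 = node c' A B1 :=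
            (ih1 A c' hnt1 hdt1 minB1 hqt1).1 hc1
          rw [hsink, hstop]
          have hq_t1 : hybB q (node c' A B1) = true := by
            rw [hybB_node]
            refine ⟨(hyb_succ_notmem A hqnA).mpr hA,
              (hyb_succ_ge B1 hnormB.1 (fun v hv => minB1 ▸ minLeaf_le B1 v hv)).mpr hB1,
              ?_, ?_⟩
            · intro h
              rw [hybB_node] at hqt1
              exact hqt1.2.2.1 (by omega)
            · intro _; exact hc1
          refine ⟨?_, ?_, ?_, ?_⟩
          · rw [hybB_node]
            refine ⟨hq_t1, hqB2', ?_, fun _ => hcombB2⟩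
            intro h
            simp only [right] at h
            omega
          · rw [Bool.eq_false_iff]
            intro hcon
            rw [hybB_node] at hcon
            have := hcon.2.2.1 (by simp only [right]; omega)
            rw [lynCondB_node] at this
            omega
          · rw [phi_node, if_neg (by omega : ¬ B2.minLeaf = q),
              if_pos (by simp [hqB1] : q ∈ (node c' A B1).leavesList)]
            have hphit1 : phi q (node c' A B1) = node c' A B1 :=
              (phi_main q (node c' A B1) hnt1 hdt1 hq_t1).1 hqt1
            rw [hphit1]
            have htrig : B1.minLeaf = q ∧ q < B2.minLeaf ∧ c' ≤ cb := ⟨minB1, minB2, hcb⟩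
            simp [rot, if_pos htrig]
          · simp only [right]
            omega
        · have hc1' : combCondB c' B1 = false := by simpa using hc1
          obtain ⟨ih_a, ih_b, ih_c, ih_d⟩ := (ih1 A c' hnt1 hdt1 minB1 hqt1).2 hc1'
          rw [hsink]
          have hleav : (sinkAux c' A B1).leavesList = A.leavesList ++ B1.leavesList :=
            leaves_sinkAux c' A B1
          refine ⟨?_, ?_, ?_, ?_⟩
          · rw [hybB_node]
            refine ⟨ih_a, hqB2', ?_, fun _ => hcombB2⟩
            intro h
            omega
          · rw [Bool.eq_false_iff]
            intro hcon
            rw [hybB_node] at hcon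
            simp [hcon.1] at ih_b
          · rw [phi_node, if_neg (by omega : ¬ B2.minLeaf = q),
              if_pos (by rw [hleav]; simp [hqB1] : q ∈ (sinkAux c' A B1).leavesList)]
            rw [ih_c]
            have htrig : B1.minLeaf = q ∧ q < B2.minLeaf ∧ c' ≤ cb := ⟨minB1, minB2, hcb⟩
            simp [rot, if_pos htrig]
          · simp only [right]
            omega

end CTree
namespace CTree

lemma psi_main (q : ℕ) : ∀ s : CTree, s.Normalized → s.leavesList.Nodup →
    hybB (q+1) s = true →
    (hybB q s = true → psi q s = s) ∧
    (hybB q s = false → hybB q (psi q s) = true ∧ hybB (q+1) (psi q s) = false ∧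
      phi q (psi q s) = s) := by
  intro s
  induction s with
  | leaf m =>
      intro _ _ _
      exact ⟨fun _ => rfl, fun h => by simp at h⟩
  | node c l r ihl ihr =>
      intro hn hd hq1
      have hq1' := hq1
      rw [hybB_node] at hq1
      obtain ⟨hl1, hr1, hA1, hB1⟩ := hq1
      have hd' := (List.nodup_append'.mp (by simpa using hd))
      have hdl : l.leavesList.Nodup := hd'.1
      have hdr : r.leavesList.Nodup := hd'.2.1
      have hdisj : ∀ x, x ∈ l.leavesList → x ∉ r.leavesList := fun x hx hx' => hd'.2.2 hx hx'
      by_cases h1 : r.minLeaf = q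
      · -- the key node is the root: sink it
        have hqnotl : q ∉ l.leavesList := fun hx => hdisj q hx (h1 ▸ minLeaf_mem r)
        have hpsis : psi q (node c l r) = sinkAux c l r := by rw [psi_node, if_pos h1]
        have hql : hybB q l = true := (hyb_succ_notmem l hqnotl).mpr hl1
        have hqr : hybB q r = true :=
          (hyb_succ_ge r hn.2.1 (fun v hv => h1 ▸ minLeaf_le r v hv)).mpr hr1
        have hAne : (right l).minLeaf ≠ q := fun hh => hqnotl (hh ▸ minLeaf_right_mem l)
        constructor
        · intro hq0
          rw [hybB_node] at hq0
          have hcomb : combCondB c r = true := hq0.2.2.2 (by omega)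
          rw [hpsis, (sink_main q r l c hn hd h1 hq1').1 hcomb]
        · intro hq0
          have hcomb : combCondB c r = false := by
            by_contra hcomb'
            have hcomb'' : combCondB c r = true := by simpa using hcomb'
            have : hybB q (node c l r) = true := by
              rw [hybB_node]
              exact ⟨hql, hqr, fun h => hA1 (by omega), fun _ => hcomb''⟩
            simp [this] at hq0
          obtain ⟨sa, sb, sc, -⟩ := (sink_main q r l c hn hd h1 hq1').2 hcomb
          rw [hpsis]
          exact ⟨sa, sb, sc⟩
      · by_cases h2 : q ∈ l.leavesList
        · -- the key node is inside l
          have hqnotr : q ∉ r.leavesList := fun hx => hdisj q h2 hx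
          have hpsis : psi q (node c l r) = node c (psi q l) r := by
            rw [psi_node, if_neg h1, if_pos h2]
          have hqr : hybB q r = true := (hyb_succ_notmem r hqnotr).mpr hr1
          constructor
          · intro hq0
            rw [hybB_node] at hq0
            rw [hpsis, (ihl hn.1 hdl hl1).1 hq0.1]
          · intro hq0
            have hql0 : hybB q l = false := by
              by_contra hql'
              have hql'' : hybB q l = true := by simpa using hql'
              have : hybB q (node c l r) = true := by
                rw [hybB_node]
                exact ⟨hql'', hqr, fun h => hA1 (by omega), fun h => hB1 (by omega)⟩
              simp [this] at hq0
            obtain ⟨ia, ib, ic⟩ := (ihl hn.1 hdl hl1).2 hql0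
            have hleav : (psi q l).leavesList = l.leavesList := leaves_psi q l
            -- l must be an internal node
            cases l with
            | leaf m =>
                have : hybB q (leaf m) = true := rfl
                simp [this] at hql0
            | node c0 l0 r0 =>
                rw [hpsis]
                -- trigger for the inverse rotation is false
                have htrigF : ¬ (r0.minLeaf = q ∧ q < r.minLeaf ∧ c0 ≤ c) := by
                  rintro ⟨ht1, ht2, ht3⟩
                  have hly := hA1 (by simp only [right]; omega)
                  rw [lynCondB_node] at hly
                  omega
                refine ⟨?_, ?_, ?_⟩
                · rw [hybB_node]
                  refine ⟨ia, hqr, ?_, fun h => hB1 (by omega)⟩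
                  by_cases hL : r0.minLeaf = q
                  · -- the root of l is the key node: it was sunk
                    have hql1 := hl1
                    rw [hybB_node] at hql1
                    obtain ⟨hl01, hr01, hA01, hB01⟩ := hql1
                    have hcomb0 : combCondB c0 r0 = false := by
                      by_contra hc'
                      have hc'' : combCondB c0 r0 = true := by simpa using hc'
                      have hq0l : q ∉ l0.leavesList := by
                        intro hx
                        have := (List.nodup_append'.mp (by simpa using hdl))
                        exact this.2.2 hx (hL ▸ minLeaf_mem r0)
                      have : hybB q (node c0 l0 r0) = true := by
                        rw [hybB_node]
                        refine ⟨(hyb_succ_notmem l0 hq0l).mpr hl01,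
                          (hyb_succ_ge r0 hn.1.2.1 (fun v hv => hL ▸ minLeaf_le r0 v hv)).mpr hr01,
                          ?_, fun _ => hc''⟩
                        intro h
                        have : (right l0).minLeaf ≠ q := fun hh => hq0l (hh ▸ minLeaf_right_mem l0)
                        exact hA01 (by omega)
                      simp [this] at hql0
                    obtain ⟨-, -, -, sd⟩ := (sink_main q r0 l0 c0 hn.1 hdl hL hl1).2 hcomb0
                    have hpsil : psi q (node c0 l0 r0) = sinkAux c0 l0 r0 := by
                      rw [psi_node, if_pos hL]
                    rw [hpsil]
                    intro h
                    omega
                  · -- the root of l is untouched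
                    have hpsil : psi q (node c0 l0 r0) =
                        (if q ∈ l0.leavesList then node c0 (psi q l0) r0
                         else node c0 l0 (psi q r0)) := by
                      rw [psi_node, if_neg hL]
                    intro h
                    by_cases hmem0 : q ∈ l0.leavesList
                    · rw [hpsil, if_pos hmem0] at h ⊢
                      simp only [right] at h
                      rw [lynCondB_node]
                      have hly := hA1 (by simp only [right]; omega)
                      rw [lynCondB_node] at hly
                      exact hly
                    · rw [hpsil, if_neg hmem0] at h ⊢
                      simp only [right] at h
                      rw [minLeaf_psi] at h
                      rw [lynCondB_node]
                      have hly := hA1 (by simp only [right]; omega)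
                      rw [lynCondB_node] at hly
                      rw [minLeaf_psi]
                      exact hly
                · rw [Bool.eq_false_iff]
                  intro hcon
                  rw [hybB_node] at hcon
                  simp [hcon.1] at ib
                · rw [phi_node, if_neg h1, if_pos (by rw [hleav]; exact h2), ic]
                  simp only [rot, if_neg htrigF]
        · -- key inside r, or absent
          have hpsis : psi q (node c l r) = node c l (psi q r) := by
            rw [psi_node, if_neg h1, if_neg h2]
          by_cases hmem : q ∈ r.leavesList
          · have hminr_lt : r.minLeaf < q := lt_of_le_of_ne (minLeaf_le r q hmem) h1
            have hql : hybB q l = true := (hyb_succ_notmem l h2).mpr hl1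
            have hAne : (right l).minLeaf ≠ q := fun hh => h2 (hh ▸ minLeaf_right_mem l)
            constructor
            · intro hq0
              rw [hybB_node] at hq0
              rw [hpsis, (ihr hn.2.1 hdr hr1).1 hq0.2.1]
            · intro hq0
              have hqr0 : hybB q r = false := by
                by_contra hqr'
                have hqr'' : hybB q r = true := by simpa using hqr'
                have : hybB q (node c l r) = true := by
                  rw [hybB_node]
                  exact ⟨hql, hqr'', fun h => hA1 (by omega), fun h => by omega⟩
                simp [this] at hq0
              obtain ⟨ia, ib, ic⟩ := (ihr hn.2.1 hdr hr1).2 hqr0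
              have hminr' : (psi q r).minLeaf = r.minLeaf := minLeaf_psi q r
              refine ⟨?_, ?_, ?_⟩
              · rw [hpsis, hybB_node]
                refine ⟨hql, ia, ?_, ?_⟩
                · intro h
                  rw [lynCondB_congr hminr']
                  exact hA1 (by omega)
                · intro h; rw [hminr'] at h; omega
              · rw [hpsis, Bool.eq_false_iff]
                intro hcon
                rw [hybB_node] at hcon
                simp [hcon.2.1] at ib
              · rw [hpsis, phi_node, if_neg (by rw [hminr']; exact h1), if_neg h2, ic]
          · have hnot : q ∉ (node c l r).leavesList := by
              simp only [leavesList_node, List.mem_append]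
              rintro (h | h)
              · exact h2 h
              · exact hmem h
            refine ⟨fun _ => by rw [psi_notmem _ hnot], fun hfalse => ?_⟩
            have : hybB q (node c l r) = true := (hyb_succ_notmem _ hnot).mpr hq1'
            simp [this] at hfalse

end CTree
namespace CTree

lemma hyb_zero : ∀ t : CTree, (hybB 0 t = true ↔ CombColored t) := by
  intro t
  induction t with
  | leaf m => simp [CombColored]
  | node c l r ihl ihr =>
      rw [hybB_node]
      show _ ↔ CombColored l ∧ CombColored r ∧ (isLeafB r = true ∨ rootColor r < c)
      rw [← ihl, ← ihr, ← combCondB_eq]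
      constructor
      · rintro ⟨a, b, -, d⟩
        exact ⟨a, b, d (Nat.zero_le _)⟩
      · rintro ⟨a, b, d⟩
        exact ⟨a, b, fun h => by omega, fun _ => d⟩

lemma hyb_top : ∀ (t : CTree) (k : ℕ), (∀ v ∈ t.leavesList, v < k) →
    (hybB k t = true ↔ LynColored t) := by
  intro t
  induction t with
  | leaf m => intro k _; simp [LynColored]
  | node c l r ihl ihr =>
      intro k hk
      have hkl : ∀ v ∈ l.leavesList, v < k := fun v hv => hk v (by simp [hv])
      have hkr : ∀ v ∈ r.leavesList, v < k := fun v hv => hk v (by simp [hv])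
      rw [hybB_node]
      show _ ↔ LynColored l ∧ LynColored r ∧ (RootLyndonB (node c l r) = true ∨ c < rootColor l)
      rw [← ihl k hkl, ← ihr k hkr]
      have htrig : (right l).minLeaf < k := hkl _ (minLeaf_right_mem l)
      have hrk : r.minLeaf < k := hkr _ (minLeaf_mem r)
      have hroot : RootLyndonB (node c l r) = true ↔
          (isLeafB l = true ∨ r.minLeaf < (right l).minLeaf) := by
        simp only [RootLyndonB, Bool.or_eq_true, decide_eq_true_eq]
        cases l <;> simp [left, right, isLeafB]
      constructor
      · rintro ⟨a, b, d, -⟩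
        refine ⟨a, b, ?_⟩
        have := d htrig
        rw [lynCondB_eq] at this
        rcases this with h | h | h
        · left; exact hroot.mpr (Or.inl h)
        · left; exact hroot.mpr (Or.inr h)
        · right; exact h
      · rintro ⟨a, b, d⟩
        refine ⟨a, b, ?_, fun h => by omega⟩
        intro _
        rw [lynCondB_eq]
        rcases d with h | h
        · rcases hroot.mp h with h' | h'
          · left; exact h'
          · right; left; exact h'
        · right; right; exact h

end CTree

open CTree in
/-- the hybrid family of sets interpolating between `CombSet` (k = 0) and
`LynSet` (k large) -/
def HybSet (n : ℕ) (μ : ℕ →₀ ℕ) (k : ℕ) : Set CTree :=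
  {T | T.OnSet n ∧ T.Normalized ∧ (∀ j, T.colorCount j = μ j) ∧ hybB k T = true}

namespace CTree

lemma onSet_nodup {n : ℕ} {T : CTree} (h : T.OnSet n) : T.leavesList.Nodup := by
  refine h.symm.nodup ?_
  exact (List.nodup_range (n := n)).map (fun a b => by omega)

lemma onSet_lt {n : ℕ} {T : CTree} (h : T.OnSet n) : ∀ v ∈ T.leavesList, v < n + 1 := by
  intro v hv
  have := h.mem_iff.mp hv
  simp only [List.mem_map, List.mem_range] at this
  obtain ⟨i, hi, rfl⟩ := this
  omega

/-- the elementary step of the bijection, in the `Lyn → Comb` direction -/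
def stepG (q : ℕ) (T : CTree) : CTree := if hybB q T = true then T else psi q T

/-- the elementary step in the `Comb → Lyn` direction -/
def stepF (q : ℕ) (T : CTree) : CTree := if hybB (q+1) T = true then T else phi q T

lemma onSet_psi {n q : ℕ} {T : CTree} (h : T.OnSet n) : (psi q T).OnSet n := by
  unfold OnSet
  rw [leaves_psi]; exact h

lemma onSet_phi {n q : ℕ} {T : CTree} (h : T.OnSet n) : (phi q T).OnSet n := by
  unfold OnSet
  rw [leaves_phi]; exact h

lemma step_bijOn (n : ℕ) (μ : ℕ →₀ ℕ) (q : ℕ) :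
    Set.BijOn (stepG q) (HybSet n μ (q+1)) (HybSet n μ q) := by
  have mapsG : Set.MapsTo (stepG q) (HybSet n μ (q+1)) (HybSet n μ q) := by
    rintro T ⟨h1, h2, h3, h4⟩
    by_cases hq : hybB q T = true
    · simpa [stepG, if_pos hq] using ⟨h1, h2, h3, hq⟩
    · have hq' : hybB q T = false := by simpa using hq
      obtain ⟨a, b, c⟩ := (psi_main q T h2 (onSet_nodup h1) h4).2 hq'
      refine ⟨?_, ?_, ?_, ?_⟩ <;> simp only [stepG, if_neg hq]
      · exact onSet_psi h1
      · exact norm_psi q T h2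
      · intro j; rw [colorCount_psi]; exact h3 j
      · exact a
  have mapsF : Set.MapsTo (stepF q) (HybSet n μ q) (HybSet n μ (q+1)) := by
    rintro T ⟨h1, h2, h3, h4⟩
    by_cases hq : hybB (q+1) T = true
    · simpa [stepF, if_pos hq] using ⟨h1, h2, h3, hq⟩
    · have hq' : hybB (q+1) T = false := by simpa using hq
      obtain ⟨a, b, c⟩ := (phi_main q T h2 (onSet_nodup h1) h4).2 hq'
      refine ⟨?_, ?_, ?_, ?_⟩ <;> simp only [stepF, if_neg hq]
      · exact onSet_phi h1
      · exact norm_phi q T h2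
      · intro j; rw [colorCount_phi]; exact h3 j
      · exact a
  have hinv : Set.InvOn (stepF q) (stepG q) (HybSet n μ (q+1)) (HybSet n μ q) := by
    constructor
    · rintro T ⟨h1, h2, h3, h4⟩
      by_cases hq : hybB q T = true
      · simp [Function.comp, stepG, if_pos hq, stepF, if_pos h4]
      · have hq' : hybB q T = false := by simpa using hq
        obtain ⟨a, b, c⟩ := (psi_main q T h2 (onSet_nodup h1) h4).2 hq'
        simp only [Function.comp, stepG, if_neg hq, stepF]
        rw [if_neg (by simp [b]), c]
    · rintro T ⟨h1, h2, h3, h4⟩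
      by_cases hq : hybB (q+1) T = true
      · simp [Function.comp, stepF, if_pos hq, stepG, if_pos h4]
      · have hq' : hybB (q+1) T = false := by simpa using hq
        obtain ⟨a, b, c⟩ := (phi_main q T h2 (onSet_nodup h1) h4).2 hq'
        simp only [Function.comp, stepF, if_neg hq, stepG]
        rw [if_neg (by simp [b]), c]
  exact hinv.bijOn mapsG mapsF

/-- the composed bijection -/
def chainG : ℕ → CTree → CTree
  | 0 => id
  | k+1 => chainG k ∘ stepG k

lemma chain_bijOn (n : ℕ) (μ : ℕ →₀ ℕ) : ∀ k : ℕ,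
    Set.BijOn (chainG k) (HybSet n μ k) (HybSet n μ 0)
  | 0 => Set.bijOn_id _
  | k+1 => (chain_bijOn n μ k).comp (step_bijOn n μ k)

lemma hybSet_zero (n : ℕ) (μ : ℕ →₀ ℕ) : HybSet n μ 0 = CombSet n μ := by
  ext T
  constructor
  · rintro ⟨h1, h2, h3, h4⟩
    exact ⟨h1, h2, (hyb_zero T).mp h4, h3⟩
  · rintro ⟨h1, h2, h3, h4⟩
    exact ⟨h1, h2, h4, (hyb_zero T).mpr h3⟩

lemma hybSet_top (n : ℕ) (μ : ℕ →₀ ℕ) : HybSet n μ (n+1) = LynSet n μ := by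
  ext T
  constructor
  · rintro ⟨h1, h2, h3, h4⟩
    exact ⟨h1, h2, (hyb_top T (n+1) (onSet_lt h1)).mp h4, h3⟩
  · rintro ⟨h1, h2, h3, h4⟩
    exact ⟨h1, h2, h4, (hyb_top T (n+1) (onSet_lt h1)).mpr h3⟩

end CTree

/-- For every `n ≥ 1` and every weak composition `μ ∈ wcomp_{n-1}` (indexed by the
positive colors, i.e. `μ 0 = 0` and color `j ≥ 1` of the paper is color index `j`
here... here we simply require `μ 0 = 0` so that colors form a copy of ℙ),
there is a bijection `Lyn_μ ≅ Comb_μ`; in particular the two sets have the same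
cardinality. -/
theorem lyndon_comb_bijection
    (n : ℕ) (hn : 1 ≤ n) (μ : ℕ →₀ ℕ) (h0 : μ 0 = 0)
    (hμ : (μ.sum fun _ m => m) = n - 1) :
    (∃ F : CTree → CTree, Set.BijOn F (LynSet n μ) (CombSet n μ)) ∧
      Nat.card (LynSet n μ) = Nat.card (CombSet n μ) := by
  have h := CTree.chain_bijOn n μ (n+1)
  rw [CTree.hybSet_zero, CTree.hybSet_top] at h
  exact ⟨⟨_, h⟩, Nat.card_congr (Set.BijOn.equiv _ h)⟩
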